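/- There exists a constant c > 0 such that for all α, β with β − α ≥ 2π and all T > 0 for which the energy E = E(α, β, T) of the unique monotone Pendulum-Lemma solution from α to β in time T satisfies 0 < E ≤ 1, one has |∂_T ẋ(0; T, α, β)| ≤ c / T. -/

import Mathlib

/-- The pendulum potential `V(x) = −cos x − 1`. -/
noncomputable def Vpend (x : ℝ) : ℝ := -Real.cos x - 1

/-- `IsPendSolOn x v s` : on the set `s`, `x` solves the pendulum equation
`ẍ + sin x = 0`, with velocity `v`. -/
def IsPendSolOn (x v : ℝ → ℝ) (s : Set ℝ) : Prop :=
  ∀ t ∈ s, HasDerivAt x (v t) t ∧ HasDerivAt v (-Real.sin (x t)) t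


open Real Set Filter Topology intervalIntegral

noncomputable def gp (e y : ℝ) : ℝ := (Real.sqrt (2 * (e + Real.cos y + 1)))⁻¹

lemma wp_pos {e : ℝ} (he : 0 < e) (y : ℝ) : 0 < 2 * (e + Real.cos y + 1) := by
  nlinarith [Real.neg_one_le_cos y]

lemma gp_pos {e : ℝ} (he : 0 < e) (y : ℝ) : 0 < gp e y :=
  inv_pos.2 (Real.sqrt_pos.2 (wp_pos he y))

lemma gp_cont {e : ℝ} (he : 0 < e) : Continuous (gp e) := by
  apply Continuous.inv₀
  · exact Real.continuous_sqrt.comp (by continuity)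
  · intro y; exact ne_of_gt (Real.sqrt_pos.2 (wp_pos he y))

lemma gp_periodic (e : ℝ) : Function.Periodic (gp e) (2 * Real.pi) := by
  intro y; simp [gp, Real.cos_add_two_pi]

lemma gp3_cont {e : ℝ} (he : 0 < e) : Continuous (fun y => (gp e y)^3) := (gp_cont he).pow 3

lemma gp_anti {e e' : ℝ} (he : 0 < e) (hee : e ≤ e') (y : ℝ) : gp e' y ≤ gp e y := by
  apply inv_anti₀ (Real.sqrt_pos.2 (wp_pos he y))
  apply Real.sqrt_le_sqrt; linarith

lemma gp_le {e : ℝ} (he : 0 < e) (y : ℝ) : gp e y ≤ (Real.sqrt (2*e))⁻¹ := by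
  apply inv_anti₀ (Real.sqrt_pos.2 (by linarith))
  apply Real.sqrt_le_sqrt; nlinarith [Real.neg_one_le_cos y]

/-- pointwise convexity-type inequality -/
lemma sqrt_inv_sub_ge {a b : ℝ} (ha : 0 < a) (hab : a ≤ b) :
    ((b - a)/2) * ((Real.sqrt b)⁻¹)^3 ≤ (Real.sqrt a)⁻¹ - (Real.sqrt b)⁻¹ := by
  have hb : 0 < b := lt_of_lt_of_le ha hab
  set A := Real.sqrt a with hA
  set B := Real.sqrt b with hB
  have hA0 : 0 < A := Real.sqrt_pos.2 ha
  have hB0 : 0 < B := Real.sqrt_pos.2 hb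
  have hAB : A ≤ B := Real.sqrt_le_sqrt hab
  have ha2 : A^2 = a := Real.sq_sqrt ha.le
  have hb2 : B^2 = b := Real.sq_sqrt hb.le
  have key : (b - a) / 2 * B⁻¹ ^ 3 * (A * B^3) ≤ (A⁻¹ - B⁻¹) * (A * B^3) := by
    have h1 : (b - a) / 2 * B⁻¹ ^ 3 * (A * B^3) = (B^2 - A^2)/2 * A := by
      field_simp [ha2, hb2]; rw [← ha2, ← hb2]
    have h2 : (A⁻¹ - B⁻¹) * (A * B^3) = (B - A) * B^2 := by
      field_simp
    rw [h1, h2]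
    nlinarith [sq_nonneg (B - A), sq_nonneg (B + A)]
  have hpos : 0 < A * B^3 := by positivity
  exact le_of_mul_le_mul_right key hpos


/-- Integrated Lipschitz-type lower bound for the time map. -/
lemma F_lip {α β e₁ e₂ : ℝ} (hαβ : α ≤ β) (h1 : 0 < e₁) (h12 : e₁ ≤ e₂) :
    (e₂ - e₁) * ∫ y in α..β, (gp e₂ y)^3 ≤
      (∫ y in α..β, gp e₁ y) - ∫ y in α..β, gp e₂ y := by
  have h2 : 0 < e₂ := lt_of_lt_of_le h1 h12
  have hint1 : IntervalIntegrable (gp e₁) MeasureTheory.volume α β :=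
    (gp_cont h1).intervalIntegrable _ _
  have hint2 : IntervalIntegrable (gp e₂) MeasureTheory.volume α β :=
    (gp_cont h2).intervalIntegrable _ _
  have hint3 : IntervalIntegrable (fun y => (e₂ - e₁) * (gp e₂ y)^3) MeasureTheory.volume α β :=
    (Continuous.intervalIntegrable (by exact (continuous_const.mul (gp3_cont h2))) _ _)
  rw [← intervalIntegral.integral_sub hint1 hint2, ← intervalIntegral.integral_const_mul]
  apply intervalIntegral.integral_mono_on hαβ hint3 (hint1.sub hint2)
  intro y _
  have := sqrt_inv_sub_ge (a := 2 * (e₁ + Real.cos y + 1)) (b := 2 * (e₂ + Real.cos y + 1))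
    (wp_pos h1 y) (by linarith)
  have heq : (2 * (e₂ + Real.cos y + 1) - 2 * (e₁ + Real.cos y + 1)) / 2 = e₂ - e₁ := by ring
  rw [heq] at this
  exact this

/-- upper bound on integral over one period -/
lemma P1_le {e : ℝ} (he : 0 < e) :
    ∫ y in (0:ℝ)..(2*Real.pi), gp e y ≤ 2 * Real.pi * (Real.sqrt (2*e))⁻¹ := by
  have h := intervalIntegral.integral_mono_on (μ := MeasureTheory.volume)
    (by positivity : (0:ℝ) ≤ 2*Real.pi)
    ((gp_cont he).intervalIntegrable _ _)
    (_root_.intervalIntegrable_const (c := (Real.sqrt (2*e))⁻¹))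
    (fun y _ => gp_le he y)
  have h2 : ∫ _ in (0:ℝ)..(2*Real.pi), (Real.sqrt (2*e))⁻¹ = 2*Real.pi*(Real.sqrt (2*e))⁻¹ := by
    rw [intervalIntegral.integral_const, smul_eq_mul]; ring
  rw [h2] at h; exact h

/-- lower bound on the cube integral over one period -/
lemma P3_ge {e : ℝ} (he : 0 < e) (he2 : e ≤ 2) :
    Real.sqrt 2 / (4 * e) ≤ ∫ y in (0:ℝ)..(2*Real.pi), (gp e y)^3 := by
  set δ := Real.sqrt (2*e) with hδ
  have hδ0 : 0 < δ := Real.sqrt_pos.2 (by linarith)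
  have hδ2 : δ ≤ 2 := by
    have h4 : Real.sqrt 4 = 2 := by
      rw [show (4:ℝ) = 2^2 by norm_num]; exact Real.sqrt_sq (by norm_num)
    have := Real.sqrt_le_sqrt (show 2*e ≤ 4 by linarith)
    rw [h4] at this; exact this
  have hπ : (3:ℝ) < Real.pi := Real.pi_gt_three
  have hsub : Real.pi - δ ≥ 0 := by linarith
  have hsub2 : Real.pi + δ ≤ 2 * Real.pi := by linarith
  have hi : ∀ a b : ℝ, IntervalIntegrable (fun y => (gp e y)^3) MeasureTheory.volume a b :=
    fun a b => (gp3_cont he).intervalIntegrable _ _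
  -- split the integral
  have split : ∫ y in (0:ℝ)..(2*Real.pi), (gp e y)^3 =
      (∫ y in (0:ℝ)..(Real.pi - δ), (gp e y)^3) + (∫ y in (Real.pi - δ)..(Real.pi + δ), (gp e y)^3)
        + ∫ y in (Real.pi + δ)..(2*Real.pi), (gp e y)^3 := by
    rw [← intervalIntegral.integral_add_adjacent_intervals (hi 0 (Real.pi - δ))
      (hi (Real.pi - δ) (2*Real.pi)),
      ← intervalIntegral.integral_add_adjacent_intervals (hi (Real.pi - δ) (Real.pi + δ))
      (hi (Real.pi + δ) (2*Real.pi)), add_assoc]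
  have h1 : 0 ≤ ∫ y in (0:ℝ)..(Real.pi - δ), (gp e y)^3 :=
    intervalIntegral.integral_nonneg hsub (fun y _ => (pow_pos (gp_pos he y) 3).le)
  have h3 : 0 ≤ ∫ y in (Real.pi + δ)..(2*Real.pi), (gp e y)^3 :=
    intervalIntegral.integral_nonneg hsub2 (fun y _ => (pow_pos (gp_pos he y) 3).le)
  -- middle piece
  have hmid : 2 * δ * ((Real.sqrt (4*e))⁻¹)^3 ≤
      ∫ y in (Real.pi - δ)..(Real.pi + δ), (gp e y)^3 := by
    have hmono := intervalIntegral.integral_mono_on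
      (by linarith : Real.pi - δ ≤ Real.pi + δ)
      (_root_.intervalIntegrable_const (c := ((Real.sqrt (4*e))⁻¹)^3))
      (hi _ _) ?_
    · calc 2 * δ * ((Real.sqrt (4*e))⁻¹)^3
          = ((Real.pi + δ) - (Real.pi - δ)) • ((Real.sqrt (4*e))⁻¹)^3 := by
            rw [smul_eq_mul]; ring
        _ = ∫ _ in (Real.pi - δ)..(Real.pi + δ), ((Real.sqrt (4*e))⁻¹)^3 := by
            rw [intervalIntegral.integral_const]
        _ ≤ _ := hmono
    · intro y hy
      have hcos : 2 + 2 * Real.cos y ≤ (y - Real.pi)^2 := by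
        have h := Real.one_sub_sq_div_two_le_cos (x := y - Real.pi)
        have : Real.cos y = -Real.cos (y - Real.pi) := by
          rw [Real.cos_sub_pi, neg_neg]
        nlinarith
      have hyδ : (y - Real.pi)^2 ≤ δ^2 := by
        have := hy.1; have := hy.2
        nlinarith
      have hδe : δ^2 = 2*e := Real.sq_sqrt (by linarith)
      have hwle : 2 * (e + Real.cos y + 1) ≤ 4 * e := by nlinarith
      have : (Real.sqrt (4*e))⁻¹ ≤ gp e y := by
        apply inv_anti₀ (Real.sqrt_pos.2 (wp_pos he y))
        exact Real.sqrt_le_sqrt hwle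
      have h0 : 0 ≤ (Real.sqrt (4*e))⁻¹ := by positivity
      exact pow_le_pow_left₀ h0 this 3
  -- arithmetic: 2δ * (√(4e))⁻³ = √2/(4e)
  have harith : 2 * δ * ((Real.sqrt (4*e))⁻¹)^3 = Real.sqrt 2 / (4 * e) := by
    have hse : Real.sqrt (4*e) = 2 * Real.sqrt e := by
      rw [show (4:ℝ)*e = 2^2 * e by ring, Real.sqrt_mul (by positivity),
        Real.sqrt_sq (by norm_num : (0:ℝ) ≤ 2)]
    have hδe : δ = Real.sqrt 2 * Real.sqrt e := by
      rw [hδ, Real.sqrt_mul (by norm_num)]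
    have hspos : 0 < Real.sqrt e := Real.sqrt_pos.2 he
    have hsq : (Real.sqrt e)^2 = e := Real.sq_sqrt he.le
    rw [hse, hδe]
    field_simp
    nlinarith [hspos]
  linarith [split, h1, h3, hmid, harith.symm.le]


lemma int_le_periods {f : ℝ → ℝ} (hc : Continuous f) (hf : ∀ y, 0 ≤ f y)
    (hp : Function.Periodic f (2*Real.pi)) {α β : ℝ} {k : ℕ}
    (hαβ : α ≤ β) (hβ : β ≤ α + (k:ℝ) * (2*Real.pi)) :
    ∫ y in α..β, f y ≤ (k:ℝ) * ∫ y in (0:ℝ)..(2*Real.pi), f y := by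
  have hint : ∀ a b : ℝ, IntervalIntegrable f MeasureTheory.volume a b :=
    fun a b => hc.intervalIntegrable _ _
  have h1 : ∫ y in α..β, f y ≤ ∫ y in α..(α + (k:ℝ)*(2*Real.pi)), f y :=
    intervalIntegral.integral_mono_interval (le_refl α) hαβ hβ
      (Filter.Eventually.of_forall (fun y => hf y)) (hint _ _)
  have h2 : ∫ y in α..(α + (k:ℝ)*(2*Real.pi)), f y
      = (k:ℝ) * ∫ y in (0:ℝ)..(2*Real.pi), f y := by
    have := hp.intervalIntegral_add_zsmul_eq (k:ℤ) α hint
    push_cast at this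
    rw [zsmul_eq_mul] at this
    push_cast at this
    rw [this, hp.intervalIntegral_add_eq α 0, zero_add]
    simp [smul_eq_mul]
  linarith

lemma periods_le_int {f : ℝ → ℝ} (hc : Continuous f) (hf : ∀ y, 0 ≤ f y)
    (hp : Function.Periodic f (2*Real.pi)) {α β : ℝ} {k : ℕ}
    (hβ : α + (k:ℝ) * (2*Real.pi) ≤ β) :
    (k:ℝ) * (∫ y in (0:ℝ)..(2*Real.pi), f y) ≤ ∫ y in α..β, f y := by
  have hint : ∀ a b : ℝ, IntervalIntegrable f MeasureTheory.volume a b :=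
    fun a b => hc.intervalIntegrable _ _
  have hk0 : α ≤ α + (k:ℝ)*(2*Real.pi) := by
    have : (0:ℝ) ≤ (k:ℝ)*(2*Real.pi) := by positivity
    linarith
  have h1 : ∫ y in α..(α + (k:ℝ)*(2*Real.pi)), f y ≤ ∫ y in α..β, f y :=
    intervalIntegral.integral_mono_interval (le_refl α) hk0 hβ
      (Filter.Eventually.of_forall (fun y => hf y)) (hint _ _)
  have h2 : ∫ y in α..(α + (k:ℝ)*(2*Real.pi)), f y
      = (k:ℝ) * ∫ y in (0:ℝ)..(2*Real.pi), f y := by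
    have := hp.intervalIntegral_add_zsmul_eq (k:ℤ) α hint
    push_cast at this
    rw [zsmul_eq_mul] at this
    push_cast at this
    rw [this, hp.intervalIntegral_add_eq α 0, zero_add]
    simp [smul_eq_mul]
  linarith


/-- The time map identity: for a confined pendulum solution with positive energy,
`∫_α^β gp E = s`, and moreover `0 ≤ v 0`. -/
lemma time_map_eq {α β : ℝ} {x v : ℝ → ℝ} {s : ℝ} (hs : 0 < s)
    (hsol : IsPendSolOn x v (Set.Icc 0 s)) (hx0 : x 0 = α) (hx1 : x s = β)
    (hconf : ∀ t ∈ Set.Icc 0 s, α ≤ x t ∧ x t ≤ β)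
    (hE : 0 < (v 0)^2/2 + Vpend α) :
    0 < v 0 ∧ (∫ y in α..β, gp ((v 0)^2/2 + Vpend α) y) = s := by
  set E := (v 0)^2/2 + Vpend α with hEdef
  have hmem0 : (0:ℝ) ∈ Set.Icc (0:ℝ) s := ⟨le_refl 0, hs.le⟩
  -- continuity
  have hxc : ContinuousOn x (Set.Icc 0 s) :=
    fun t ht => ((hsol t ht).1.continuousAt).continuousWithinAt
  have hvc : ContinuousOn v (Set.Icc 0 s) :=
    fun t ht => ((hsol t ht).2.continuousAt).continuousWithinAt
  -- energy conservation
  have hW : ∀ t ∈ Set.Icc 0 s, HasDerivAt (fun u => (v u)^2/2 + Vpend (x u)) 0 t := by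
    intro t ht
    obtain ⟨hx, hv⟩ := hsol t ht
    have h1 : HasDerivAt (fun u => (v u)^2/2)
        ((2 * v t ^ 1 * (-Real.sin (x t)))/2) t := (hv.pow 2).div_const 2
    have h2 : HasDerivAt (fun u => Vpend (x u)) (Real.sin (x t) * v t) t := by
      have hcos : HasDerivAt (fun u => Real.cos (x u)) (-Real.sin (x t) * v t) t :=
        (Real.hasDerivAt_cos (x t)).comp t hx
      have : HasDerivAt (fun u => -Real.cos (x u) - 1) (-(-Real.sin (x t) * v t)) t :=
        (hcos.neg).sub_const 1
      simpa [Vpend] using this.congr_deriv (by ring)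
    have := h1.add h2
    exact this.congr_deriv (by ring)
  have hWc : ContinuousOn (fun u => (v u)^2/2 + Vpend (x u)) (Set.Icc 0 s) := by
    have hVc : Continuous Vpend := by unfold Vpend; continuity
    exact ((hvc.pow 2).div_const 2).add (hVc.comp_continuousOn hxc)
  have hconst : ∀ t ∈ Set.Icc 0 s, (v t)^2/2 + Vpend (x t) = E := by
    intro t ht
    have := constant_of_has_deriv_right_zero hWc
      (fun u hu => (hW u (Set.Ico_subset_Icc_self hu)).hasDerivWithinAt) t ht
    rw [this, hx0]
  have hv2 : ∀ t ∈ Set.Icc 0 s, (v t)^2 = 2 * (E + Real.cos (x t) + 1) := by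
    intro t ht
    have := hconst t ht
    simp only [Vpend] at this
    linear_combination 2 * this
  have hvne : ∀ t ∈ Set.Icc 0 s, v t ≠ 0 := by
    intro t ht h0
    have := hv2 t ht
    rw [h0] at this
    nlinarith [Real.neg_one_le_cos (x t), wp_pos hE (x t)]
  -- v 0 ≥ 0
  have hv00 : 0 ≤ v 0 := by
    have hx0' : HasDerivAt x (v 0) 0 := (hsol 0 hmem0).1
    have hslope : Tendsto (slope x 0) (𝓝[>] 0) (𝓝 (v 0)) :=
      (hasDerivAt_iff_tendsto_slope.1 hx0').mono_left
        (nhdsWithin_mono _ (fun y hy => ne_of_gt hy))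
    refine ge_of_tendsto hslope ?_
    filter_upwards [Ioo_mem_nhdsGT_of_mem ⟨le_refl (0:ℝ), hs⟩] with t ht
    rw [slope_def_field]
    have h1 := (hconf t ⟨ht.1.le, ht.2.le⟩).1
    rw [hx0]
    apply div_nonneg (by linarith) (by linarith [ht.1])
  have hv0pos : 0 < v 0 := lt_of_le_of_ne hv00 (Ne.symm (hvne 0 hmem0))
  -- v positive on Icc
  have hvpos : ∀ t ∈ Set.Icc 0 s, 0 < v t := by
    intro t ht
    by_contra hle
    push_neg at hle
    have hlt : v t < 0 := lt_of_le_of_ne hle (hvne t ht)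
    have hsub : Set.Icc (0:ℝ) t ⊆ Set.Icc 0 s := Set.Icc_subset_Icc (le_refl 0) ht.2
    have : (0:ℝ) ∈ Set.Icc (v t) (v 0) := ⟨hlt.le, hv00⟩
    have := intermediate_value_Icc' ht.1 (hvc.mono hsub) this
    obtain ⟨t', ht', hvt'⟩ := this
    exact hvne t' (hsub ht') hvt'
  refine ⟨hv0pos, ?_⟩
  -- change of variables
  have huIcc : Set.uIcc (0:ℝ) s = Set.Icc 0 s := Set.uIcc_of_le hs.le
  have hEpos : 0 < E := hE
  have key := intervalIntegral.integral_comp_smul_deriv (f := x) (f' := v) (g := gp E)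
    (a := 0) (b := s)
    (fun t ht => (hsol t (huIcc ▸ ht)).1) (huIcc ▸ hvc) (gp_cont hEpos)
  have hone : Set.EqOn (fun t => v t • (gp E ∘ x) t) (fun _ => (1:ℝ)) (Set.uIcc 0 s) := by
    intro t ht
    rw [huIcc] at ht
    have hv2t := hv2 t ht
    have hvt := hvpos t ht
    simp only [Function.comp, smul_eq_mul, gp]
    rw [← hv2t, Real.sqrt_sq_eq_abs, abs_of_pos hvt]
    field_simp
  rw [intervalIntegral.integral_congr hone] at key
  simp only [intervalIntegral.integral_const, smul_eq_mul, mul_one, sub_zero] at key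
  rw [hx0, hx1] at key
  exact key.symm


lemma G_anti {α β e e' : ℝ} (hαβ : α ≤ β) (he : 0 < e) (hee : e ≤ e') :
    ∫ y in α..β, (gp e' y)^3 ≤ ∫ y in α..β, (gp e y)^3 := by
  have he' : 0 < e' := lt_of_lt_of_le he hee
  apply intervalIntegral.integral_mono_on hαβ ((gp3_cont he').intervalIntegrable _ _)
    ((gp3_cont he).intervalIntegrable _ _)
  intro y _
  exact pow_le_pow_left₀ (gp_pos he' y).le (gp_anti he hee y) 3


set_option maxHeartbeats 1000000 in
/-- **Polynomial smallness of `∂_T ẋ(0; T, α, β)` in the winding case.**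
There is `c > 0` such that for `β − α ≥ 2π`, if for each `T > 0` the function
`x T` (with velocity `v T`) is the unique monotone Pendulum-Lemma solution of
`ẍ + sin x = 0` with `x(0) = α`, `x(T) = β`, confined to `[α, β]`, then for
every `T > 0` for which the energy `E(α,β,T) = v(0)²/2 + V(α)` of this
solution lies in `(0, 1]`, one has `|∂_T ẋ(0; T, α, β)| ≤ c/T`. -/
theorem polynomial_decay_initial_velocity :
    ∃ c > (0:ℝ), ∀ α β : ℝ, 2 * Real.pi ≤ β - α →
      ∀ x v : ℝ → ℝ → ℝ,
      (∀ T, 0 < T →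
        IsPendSolOn (x T) (v T) (Set.Icc 0 T) ∧ x T 0 = α ∧ x T T = β ∧
        ∀ t ∈ Set.Icc 0 T, α ≤ x T t ∧ x T t ≤ β) →
      ∀ T, 0 < T →
        0 < (v T 0) ^ 2 / 2 + Vpend α → (v T 0) ^ 2 / 2 + Vpend α ≤ 1 →
        |deriv (fun s => v s 0) T| ≤ c / T := by
  refine ⟨40, by norm_num, ?_⟩
  intro α β hαβ x v hfam T hT hE0 hE1
  by_cases hdiff : DifferentiableAt ℝ (fun s => v s 0) T
  swap
  · rw [deriv_zero_of_not_differentiableAt hdiff, abs_zero]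
    positivity
  have hπ := Real.pi_pos
  have hαβ' : α < β := by nlinarith
  have hαβle : α ≤ β := hαβ'.le
  set E : ℝ → ℝ := fun s => (v s 0)^2/2 + Vpend α with hEdef
  have hET0 : 0 < E T := hE0
  have hET1 : E T ≤ 1 := hE1
  have htm : ∀ s, 0 < s → 0 < E s →
      0 < v s 0 ∧ (∫ y in α..β, gp (E s) y) = s := by
    intro s hs hEs
    obtain ⟨hsol, h0, h1, hconf⟩ := hfam s hs
    exact time_map_eq hs hsol h0 h1 hconf hEs
  obtain ⟨hvT, hFT⟩ := htm T hT hET0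
  have hd : HasDerivAt (fun s => v s 0) (deriv (fun s => v s 0) T) T := hdiff.hasDerivAt
  set d := deriv (fun s => v s 0) T with hddef
  have hEd : HasDerivAt E (v T 0 * d) T := by
    have h1 : HasDerivAt (fun s => (v s 0)^2) (2 * v T 0 ^ 1 * d) T := hd.pow 2
    have h2 := (h1.div_const 2).add_const (Vpend α)
    exact h2.congr_deriv (by ring)
  have h2ET : 0 < 2 * E T := by linarith
  set Gq := ∫ y in α..β, (gp (2 * E T) y)^3 with hGq
  have hGqpos : 0 < Gq :=
    intervalIntegral.intervalIntegral_pos_of_pos_on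
      ((gp3_cont h2ET).intervalIntegrable _ _)
      (fun y _ => pow_pos (gp_pos h2ET y) 3) hαβ'
  -- eventual facts
  have hev : ∀ᶠ s in 𝓝 T, 0 < s ∧ 0 < E s ∧ E s ≤ 2 * E T := by
    have hcont : ContinuousAt E T := hEd.continuousAt
    have h1 : ∀ᶠ s in 𝓝 T, E s ∈ Set.Ioo 0 (2 * E T) :=
      hcont (Ioo_mem_nhds hET0 (by linarith))
    have h2 : ∀ᶠ s in 𝓝 T, 0 < s := eventually_gt_nhds hT
    filter_upwards [h1, h2] with s hs1 hs2
    exact ⟨hs2, hs1.1, hs1.2.le⟩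
  -- local Lipschitz bound
  have hlip : ∀ᶠ s in 𝓝 T, Gq * |E s - E T| ≤ |s - T| := by
    filter_upwards [hev] with s hs
    obtain ⟨hs0, hEs0, hEs2⟩ := hs
    have hFs := (htm s hs0 hEs0).2
    rcases le_or_gt (E s) (E T) with hle | hlt
    · have h := F_lip hαβle hEs0 hle
      rw [hFs, hFT] at h
      have hmono : Gq ≤ ∫ y in α..β, (gp (E T) y)^3 :=
        G_anti hαβle hET0 (by linarith)
      have h0 : (0:ℝ) ≤ E T - E s := by linarith
      have hkey : Gq * (E T - E s) ≤ s - T := by nlinarith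
      have hst : (0:ℝ) ≤ s - T := le_trans (by positivity) hkey
      rw [abs_of_nonpos (by linarith : E s - E T ≤ 0), abs_of_nonneg hst]
      linarith [hkey]
    · have h := F_lip hαβle hET0 hlt.le
      rw [hFs, hFT] at h
      have hmono : Gq ≤ ∫ y in α..β, (gp (E s) y)^3 :=
        G_anti hαβle hEs0 hEs2
      have h0 : (0:ℝ) ≤ E s - E T := by linarith
      have hkey : Gq * (E s - E T) ≤ T - s := by nlinarith
      have hst : (0:ℝ) ≤ T - s := le_trans (by positivity) hkey
      rw [abs_of_nonneg (by linarith : (0:ℝ) ≤ E s - E T),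
        abs_of_nonpos (by linarith : s - T ≤ 0)]
      linarith [hkey]
  -- derivative bound for E
  have hEp : |v T 0 * d| ≤ 1 / Gq := by
    have hslope : Tendsto (slope E T) (𝓝[≠] T) (𝓝 (v T 0 * d)) :=
      hasDerivAt_iff_tendsto_slope.1 hEd
    refine le_of_tendsto hslope.abs ?_
    filter_upwards [hlip.filter_mono nhdsWithin_le_nhds, self_mem_nhdsWithin] with s hs hne
    have hne' : s - T ≠ 0 := sub_ne_zero.2 hne
    rw [slope_def_field, abs_div]
    rw [div_le_div_iff₀ (abs_pos.2 hne') hGqpos]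
    calc |E s - E T| * Gq = Gq * |E s - E T| := by ring
      _ ≤ |s - T| := hs
      _ = 1 * |s - T| := (one_mul _).symm
  -- lower bound on v T 0
  have hvge : Real.sqrt (2 * E T) ≤ v T 0 := by
    have h1 : 2 * E T ≤ (v T 0)^2 := by
      have hc := Real.neg_one_le_cos α
      simp only [hEdef, Vpend]
      nlinarith
    calc Real.sqrt (2 * E T) ≤ Real.sqrt ((v T 0)^2) := Real.sqrt_le_sqrt h1
      _ = v T 0 := Real.sqrt_sq hvT.le
  -- bound |d|
  have hd1 : |d| ≤ 1 / (Gq * v T 0) := by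
    have habs : |v T 0 * d| = v T 0 * |d| := by
      rw [abs_mul, abs_of_pos hvT]
    rw [habs] at hEp
    rw [le_div_iff₀ (by positivity)]
    rw [le_div_iff₀ hGqpos] at hEp
    nlinarith
  -- counting the periods
  set k := Nat.floor ((β - α)/(2*Real.pi)) with hk
  have hge1 : (1:ℝ) ≤ (β - α)/(2*Real.pi) := by
    rw [le_div_iff₀ (by positivity)]; linarith
  have hk1 : (1:ℝ) ≤ (k:ℝ) := by
    have := Nat.le_floor (α := ℝ) (n := 1) (by exact_mod_cast hge1)
    exact_mod_cast this
  have hklow : α + (k:ℝ)*(2*Real.pi) ≤ β := by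
    have h := Nat.floor_le (le_trans zero_le_one hge1)
    rw [le_div_iff₀ (by positivity : (0:ℝ) < 2*Real.pi)] at h
    linarith
  have hkup : β ≤ α + ((k:ℝ)+1)*(2*Real.pi) := by
    have := Nat.lt_floor_add_one ((β - α)/(2*Real.pi))
    rw [div_lt_iff₀ (by positivity)] at this
    nlinarith [this]
  -- upper bound on T
  set S := Real.sqrt (2 * E T) with hS
  have hSpos : 0 < S := Real.sqrt_pos.2 h2ET
  have hS2 : S^2 = 2 * E T := Real.sq_sqrt h2ET.le
  have hP1 : ∫ y in (0:ℝ)..(2*Real.pi), gp (E T) y ≤ 2*Real.pi*S⁻¹ := P1_le hET0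
  have hP1nn : 0 ≤ ∫ y in (0:ℝ)..(2*Real.pi), gp (E T) y :=
    intervalIntegral.integral_nonneg (by positivity) (fun y _ => (gp_pos hET0 y).le)
  have hTle : T ≤ 2*(k:ℝ) * (2*Real.pi*S⁻¹) := by
    have h1 : ∫ y in α..β, gp (E T) y ≤ ((k+1:ℕ):ℝ) * ∫ y in (0:ℝ)..(2*Real.pi), gp (E T) y :=
      int_le_periods (gp_cont hET0) (fun y => (gp_pos hET0 y).le) (gp_periodic _)
        hαβle (by push_cast; linarith)
    rw [← hFT]
    calc ∫ y in α..β, gp (E T) y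
        ≤ ((k+1:ℕ):ℝ) * ∫ y in (0:ℝ)..(2*Real.pi), gp (E T) y := h1
      _ ≤ 2*(k:ℝ) * ∫ y in (0:ℝ)..(2*Real.pi), gp (E T) y := by
          apply mul_le_mul_of_nonneg_right _ hP1nn
          push_cast; linarith
      _ ≤ 2*(k:ℝ) * (2*Real.pi*S⁻¹) := by
          apply mul_le_mul_of_nonneg_left hP1 (by positivity)
  -- lower bound on Gq
  have hgp3per : Function.Periodic (fun y => (gp (2*E T) y)^3) (2*Real.pi) := by
    intro y; simp only; rw [gp_periodic]
  have hGqge : (k:ℝ) * (Real.sqrt 2/(4*(2*E T))) ≤ Gq := by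
    calc (k:ℝ) * (Real.sqrt 2/(4*(2*E T)))
        ≤ (k:ℝ) * ∫ y in (0:ℝ)..(2*Real.pi), (gp (2*E T) y)^3 := by
          apply mul_le_mul_of_nonneg_left (P3_ge h2ET (by linarith)) (by positivity)
      _ ≤ Gq := periods_le_int (gp3_cont h2ET)
          (fun y => (pow_pos (gp_pos h2ET y) 3).le) hgp3per hklow
  -- final numeric computation
  have hsqrt2 : (1.4:ℝ) ≤ Real.sqrt 2 := by
    rw [show (1.4:ℝ) = Real.sqrt (1.4^2) by rw [Real.sqrt_sq]; norm_num]
    apply Real.sqrt_le_sqrt; norm_num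
  have hπlt : Real.pi ≤ 3.15 := by linarith [Real.pi_lt_d2]
  refine le_trans hd1 ?_
  rw [div_le_div_iff₀ (by positivity) hT]
  -- goal : 1 * T ≤ 40 * (Gq * v T 0)  (up to arrangement)
  have step1 : T * S ≤ 4 * Real.pi * (k:ℝ) := by
    calc T * S ≤ (2*(k:ℝ) * (2*Real.pi*S⁻¹)) * S := mul_le_mul_of_nonneg_right hTle hSpos.le
      _ = 4*Real.pi*(k:ℝ)*(S⁻¹*S) := by ring
      _ = 4*Real.pi*(k:ℝ) := by rw [inv_mul_cancel₀ hSpos.ne', mul_one]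
  have step2 : (k:ℝ) * Real.sqrt 2 ≤ Gq * (8 * E T) := by
    have h := hGqge
    have h2 : (k:ℝ) * (Real.sqrt 2/(4*(2*E T))) = ((k:ℝ)*Real.sqrt 2)/(8*E T) := by ring
    rw [h2, div_le_iff₀ (by positivity : (0:ℝ) < 8*E T)] at h
    linarith [h]
  have step3 : Gq * S ≤ Gq * v T 0 := mul_le_mul_of_nonneg_left hvge hGqpos.le
  -- 40 * (Gq * v T 0) * S ≥ 40 * Gq * S^2 = 80 E T Gq ≥ 10 k √2 ≥ 14 k ≥ 4πk ≥ T S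
  have c1 : T * S ≤ 10 * ((k:ℝ) * Real.sqrt 2) := by
    have hmul : 4 * Real.pi * (k:ℝ) ≤ (10 * Real.sqrt 2) * (k:ℝ) := by
      apply mul_le_mul_of_nonneg_right _ (Nat.cast_nonneg k)
      linarith [hπlt, hsqrt2]
    calc T * S ≤ 4*Real.pi*(k:ℝ) := step1
      _ ≤ (10*Real.sqrt 2)*(k:ℝ) := hmul
      _ = 10 * ((k:ℝ)*Real.sqrt 2) := by ring
  have c2 : 10 * ((k:ℝ) * Real.sqrt 2) ≤ 40 * Gq * S^2 := by
    have e : 40 * Gq * S^2 = 10 * (Gq * (8 * E T)) := by rw [hS2]; ring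
    rw [e]
    linarith [step2]
  have c4 : (40 * (Gq * S)) * S ≤ (40 * (Gq * v T 0)) * S := by
    have h := mul_le_mul_of_nonneg_right step3 hSpos.le
    linarith [h]
  have step4 : T * S ≤ (40 * (Gq * v T 0)) * S := by
    calc T * S ≤ 10 * ((k:ℝ)*Real.sqrt 2) := c1
      _ ≤ 40 * Gq * S^2 := c2
      _ = (40 * (Gq * S)) * S := by ring
      _ ≤ (40 * (Gq * v T 0)) * S := c4
  have hfin := le_of_mul_le_mul_right step4 hSpos
  linarith
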